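/- arXiv:2303.15170 — 7 statements merged into one kernel-verified Lean document; each statement's English description precedes it below -/
import Mathlib

section
/- In the dynamic panel model y_t = α⁰ + β⁰x_t + ω_t + η_t with ω_t = ρ_ω⁰ω_{t-1} + ξ_t and input process x_t = π⁰ + θ⁰ω_t + κ_t, κ_t = ρ_x⁰κ_{t-1} + u_t (θ⁰ ≠ 0), the ρ-differenced residual evaluated at the pseudo-parameters (α,β,ρ) = (α⁰ − π⁰/θ⁰, β⁰ + 1/θ⁰, ρ_x⁰), namely (y_t − ρ y_{t-1}) − α(1 − ρ) − β(x_t − ρ x_{t-1}), equals −(1/θ⁰)u_t + η_t − ρ_x⁰η_{t-1} identically (as an algebraic identity in the random variables). -/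
/-- Theorem 1 (pseudo-solution residual identity): at the pseudo-parameters
`(α, β, ρ) = (α⁰ − π⁰/θ⁰, β⁰ + 1/θ⁰, ρ_x⁰)`, the ρ-differenced residual equals
`−(1/θ⁰)u_t + η_t − ρ_x⁰ η_{t-1}`. -/
theorem pseudo_solution_residual
    (y x ω κ ξ u η : ℤ → ℝ) (α0 β0 π0 θ0 ρω0 ρx0 : ℝ) (hθ : θ0 ≠ 0)
    (hy : ∀ t, y t = α0 + β0 * x t + ω t + η t)
    (hx : ∀ t, x t = π0 + θ0 * ω t + κ t)
    (hω : ∀ t, ω t = ρω0 * ω (t - 1) + ξ t)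
    (hκ : ∀ t, κ t = ρx0 * κ (t - 1) + u t) :
    ∀ t, (y t - ρx0 * y (t - 1)) - (α0 - π0 / θ0) * (1 - ρx0)
        - (β0 + 1 / θ0) * (x t - ρx0 * x (t - 1))
      = -(1 / θ0) * u t + η t - ρx0 * η (t - 1) := by
  intro t
  rw [hy t, hy (t-1), hx t, hx (t-1), hκ t]
  field_simp
  ring
end

section
/- Suppose ρ_ω⁰ = ρ_x⁰ = ρ⁰ and the innovations ξ_t, u_t, η_t, η_{t-1} all have zero conditional expectation given a σ-algebra I_{t-1}. Then for ANY pair (α, β) satisfying (α⁰ − α)(1 − ρ⁰) + (β⁰ − β)π⁰(1 − ρ⁰) = 0, the conditional moment E[(y_t − ρ⁰y_{t-1}) − α(1 − ρ⁰) − β(x_t − ρ⁰x_{t-1}) | I_{t-1}] equals 0; hence the moment condition has a continuum of solutions when ρ_ω⁰ = ρ_x⁰. -/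
open MeasureTheory

/-- When `ρ_ω⁰ = ρ_x⁰ = ρ⁰`, any `(α, β)` with
`(α⁰ − α)(1 − ρ⁰) + (β⁰ − β)π⁰(1 − ρ⁰) = 0` satisfies the conditional moment
condition: a continuum of solutions. -/
theorem continuum_of_solutions_when_equal_rho
    {Ω : Type*} {m m0 : MeasurableSpace Ω} (hm : m ≤ m0)
    (μ : Measure Ω) [IsProbabilityMeasure μ]
    (yt yt1 xt xt1 ωt ωt1 κt κt1 ξt ut ηt ηt1 : Ω → ℝ)
    (α0 β0 π0 θ0 ρ0 : ℝ)
    (hy : ∀ w, yt w = α0 + β0 * xt w + ωt w + ηt w)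
    (hy1 : ∀ w, yt1 w = α0 + β0 * xt1 w + ωt1 w + ηt1 w)
    (hx : ∀ w, xt w = π0 + θ0 * ωt w + κt w)
    (hx1 : ∀ w, xt1 w = π0 + θ0 * ωt1 w + κt1 w)
    (hω : ∀ w, ωt w = ρ0 * ωt1 w + ξt w)
    (hκ : ∀ w, κt w = ρ0 * κt1 w + ut w)
    (hint_y : Integrable yt μ) (hint_y1 : Integrable yt1 μ)
    (hint_x : Integrable xt μ) (hint_x1 : Integrable xt1 μ)
    (hint_ξ : Integrable ξt μ) (hint_u : Integrable ut μ)
    (hint_η : Integrable ηt μ) (hint_η1 : Integrable ηt1 μ)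
    (hξ : μ[ξt | m] =ᵐ[μ] 0) (hu : μ[ut | m] =ᵐ[μ] 0)
    (hη : μ[ηt | m] =ᵐ[μ] 0) (hη1 : μ[ηt1 | m] =ᵐ[μ] 0)
    (α β : ℝ)
    (hsol : (α0 - α) * (1 - ρ0) + (β0 - β) * (π0 * (1 - ρ0)) = 0) :
    μ[fun w => (yt w - ρ0 * yt1 w) - α * (1 - ρ0)
        - β * (xt w - ρ0 * xt1 w) | m] =ᵐ[μ] 0 := by
  have key : (fun w => (yt w - ρ0 * yt1 w) - α * (1 - ρ0)
        - β * (xt w - ρ0 * xt1 w))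
      = ((((β0 - β) * θ0 + 1) • ξt) + ((β0 - β) • ut)) + (ηt - ρ0 • ηt1) := by
    funext w
    simp only [Pi.add_apply, Pi.sub_apply, Pi.smul_apply, smul_eq_mul]
    rw [hy w, hy1 w, hx w, hx1 w, hω w, hκ w]
    linear_combination hsol
  rw [key]
  have hA : Integrable (((β0 - β) * θ0 + 1) • ξt) μ := hint_ξ.smul _
  have hB : Integrable ((β0 - β) • ut) μ := hint_u.smul _
  have hC : Integrable (ηt - ρ0 • ηt1) μ := hint_η.sub (hint_η1.smul _)
  have e1 : μ[((β0 - β) * θ0 + 1) • ξt | m] =ᵐ[μ] 0 := by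
    refine (condExp_smul _ _ m).trans ?_
    filter_upwards [hξ] with w h
    simp [h]
  have e2 : μ[(β0 - β) • ut | m] =ᵐ[μ] 0 := by
    refine (condExp_smul _ _ m).trans ?_
    filter_upwards [hu] with w h
    simp [h]
  have e3 : μ[ηt - ρ0 • ηt1 | m] =ᵐ[μ] 0 := by
    refine (condExp_sub hint_η (hint_η1.smul _) m).trans ?_
    have hs := condExp_smul (m := m) (μ := μ) ρ0 ηt1
    filter_upwards [hη, hη1, hs] with w h1 h2 h3
    simp [Pi.sub_apply, h1, h3, h2]
  refine (condExp_add (hA.add hB) hC m).trans ?_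
  filter_upwards [condExp_add (m := m) hA hB, e1, e2, e3] with w h h1 h2 h3
  simp [Pi.add_apply, h, h1, h2, h3]
end

section
/- Under the stronger timing assumption x_t = π⁰ + θ⁰ρ_ω⁰ω_{t-1} + κ_{t-1} (input chosen at t−1), the expression (π⁰/θ⁰)(1 − ρ_x⁰) − (1/θ⁰)(x_t − ρ_x⁰x_{t-1}) + (ω_t − ρ_x⁰ω_{t-1}) + (η_t − ρ_x⁰η_{t-1}) equals −(1/θ⁰)u_{t-1} + ξ_t − ρ_x⁰ξ_{t-1} + η_t − ρ_x⁰η_{t-1} identically, so the pseudo-solution residual contains the lagged innovations u_{t-1} and ξ_{t-1}. -/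
/-- Under the stronger timing assumption `x_t = π⁰ + θ⁰ρ_ω⁰ω_{t-1} + κ_{t-1}`,
the pseudo-solution residual contains lagged innovations `u_{t-1}` and `ξ_{t-1}`. -/
theorem stronger_timing_pseudo_residual
    (x ω κ ξ u η : ℤ → ℝ) (π0 θ0 ρω0 ρx0 : ℝ) (hθ : θ0 ≠ 0)
    (hω : ∀ t, ω t = ρω0 * ω (t - 1) + ξ t)
    (hκ : ∀ t, κ t = ρx0 * κ (t - 1) + u t)
    (hx : ∀ t, x t = π0 + θ0 * ρω0 * ω (t - 1) + κ (t - 1)) :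
    ∀ t, (π0 / θ0) * (1 - ρx0) - (1 / θ0) * (x t - ρx0 * x (t - 1))
        + (ω t - ρx0 * ω (t - 1)) + (η t - ρx0 * η (t - 1))
      = -(1 / θ0) * u (t - 1) + ξ t - ρx0 * ξ (t - 1)
          + η t - ρx0 * η (t - 1) := by
  intro t
  rw [hx t, hx (t - 1), hω t, hω (t - 1), hκ (t - 1)]
  field_simp
  ring
end

section
/- Under the map π_{yy} = ρ_ω + βθ(ρ_ω − ρ_x), π_{yx} = −β(1 + βθ)(ρ_ω − ρ_x), π_{xy} = θ(ρ_ω − ρ_x), π_{xx} = ρ_x − βθ(ρ_ω − ρ_x), if ρ_ω > ρ_x then θ = π_{xy}/√((π_{yy} − π_{xx})² + 4π_{yx}π_{xy}); if ρ_ω < ρ_x then θ = −π_{xy}/√((π_{yy} − π_{xx})² + 4π_{yx}π_{xy}). In particular the two possible inverse values of θ have opposite signs (when π_{xy} ≠ 0). -/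
/-- The two possible inverse values of `θ` from the reduced form have opposite
signs: if `ρ_ω > ρ_x` then `θ = +π_{xy}/√(⋯)`; if `ρ_ω < ρ_x` then
`θ = −π_{xy}/√(⋯)`. -/
theorem theta_sign_from_reduced_form
    (β θ ρω ρx πyy πyx πxy πxx : ℝ) (hθ : θ ≠ 0) (hρ : ρω ≠ ρx)
    (hyy : πyy = ρω + β * θ * (ρω - ρx))
    (hyx : πyx = -(β * (1 + β * θ) * (ρω - ρx)))
    (hxy : πxy = θ * (ρω - ρx))
    (hxx : πxx = ρx - β * θ * (ρω - ρx)) :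
    (ρω > ρx → θ = πxy / Real.sqrt ((πyy - πxx) ^ 2 + 4 * πyx * πxy)) ∧
    (ρω < ρx → θ = -(πxy / Real.sqrt ((πyy - πxx) ^ 2 + 4 * πyx * πxy))) := by
  have key : (πyy - πxx) ^ 2 + 4 * πyx * πxy = (ρω - ρx) ^ 2 := by
    subst hyy hyx hxy hxx; ring
  rw [key, Real.sqrt_sq_eq_abs]
  constructor
  · intro h
    have hd : 0 < ρω - ρx := sub_pos.mpr h
    rw [hxy, abs_of_pos hd, mul_div_assoc, div_self hd.ne', mul_one]
  · intro h
    have hd : ρω - ρx < 0 := sub_neg.mpr h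
    rw [hxy, abs_of_neg hd]
    rw [div_neg, neg_neg, mul_div_assoc, div_self (by linarith : ρω - ρx ≠ 0), mul_one]
end

section
/- Given reduced-form parameters arising from structural parameters (β, θ, ρ_ω, ρ_x) with θ ≠ 0 and ρ_ω ≠ ρ_x, the inversion formulas hold: β = ½((π_{yy} − π_{xx})/π_{xy} − 1/θ), ρ_ω = ½(π_{yy} + π_{xx} + π_{xy}/θ), and ρ_x = ½(π_{yy} + π_{xx} − π_{xy}/θ). -/
/-- Inversion formulas from reduced-form to structural parameters. -/
theorem structural_inversion_formulas
    (β θ ρω ρx πyy πyx πxy πxx : ℝ) (hθ : θ ≠ 0) (hρ : ρω ≠ ρx)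
    (hyy : πyy = ρω + β * θ * (ρω - ρx))
    (hyx : πyx = -(β * (1 + β * θ) * (ρω - ρx)))
    (hxy : πxy = θ * (ρω - ρx))
    (hxx : πxx = ρx - β * θ * (ρω - ρx)) :
    β = (1 / 2) * ((πyy - πxx) / πxy - 1 / θ) ∧
    ρω = (1 / 2) * (πyy + πxx + πxy / θ) ∧
    ρx = (1 / 2) * (πyy + πxx - πxy / θ) := by
  have hd : ρω - ρx ≠ 0 := sub_ne_zero.mpr hρ
  subst hyy hyx hxy hxx
  refine ⟨?_, ?_, ?_⟩ <;> field_simp <;> ring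
end

section
/- The reduced-form-to-structural mapping has exactly two solutions: if (β, θ, ρ_ω, ρ_x) with θ ≠ 0, ρ_ω ≠ ρ_x generates reduced form (π_{yy}, π_{yx}, π_{xy}, π_{xx}), then (β', θ', ρ_ω', ρ_x') := (β + 1/θ, −θ, ρ_x, ρ_ω) generates the SAME reduced form, i.e., π_{yy} = ρ_ω' + β'θ'(ρ_ω' − ρ_x'), π_{yx} = −β'(1 + β'θ')(ρ_ω' − ρ_x'), π_{xy} = θ'(ρ_ω' − ρ_x'), and π_{xx} = ρ_x' − β'θ'(ρ_ω' − ρ_x'). -/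
/-- The pseudo-structural parameters `(β + 1/θ, −θ, ρ_x, ρ_ω)` generate the same
reduced-form parameters as `(β, θ, ρ_ω, ρ_x)`. -/
theorem two_structural_solutions_same_reduced_form
    (β θ ρω ρx πyy πyx πxy πxx : ℝ) (hθ : θ ≠ 0) (hρ : ρω ≠ ρx)
    (hyy : πyy = ρω + β * θ * (ρω - ρx))
    (hyx : πyx = -(β * (1 + β * θ) * (ρω - ρx)))
    (hxy : πxy = θ * (ρω - ρx))
    (hxx : πxx = ρx - β * θ * (ρω - ρx)) :
    πyy = ρx + (β + 1 / θ) * (-θ) * (ρx - ρω) ∧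
    πyx = -((β + 1 / θ) * (1 + (β + 1 / θ) * (-θ)) * (ρx - ρω)) ∧
    πxy = (-θ) * (ρx - ρω) ∧
    πxx = ρω - (β + 1 / θ) * (-θ) * (ρx - ρω) := by
  subst hyy hyx hxy hxx
  refine ⟨?_, ?_, ?_, ?_⟩ <;> field_simp <;> ring
end

section
/- If the innovation terms satisfy E[u_t | I_{t-1}] = 0, E[η_t | I_{t-1}] = 0, and E[η_{t-1} | I_{t-1}] = 0 for a σ-algebra I_{t-1}, then E[−(1/θ⁰)u_t + η_t − ρ_x⁰η_{t-1} | I_{t-1}] = 0; combined with the algebraic identity of Theorem 1, this shows the conditional moment condition E[(y_t − ρ y_{t-1}) − α(1 − ρ) − β(x_t − ρ x_{t-1}) | I_{t-1}] = 0 holds at the pseudo-parameters (α, β, ρ) = (α⁰ − π⁰/θ⁰, β⁰ + 1/θ⁰, ρ_x⁰). -/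
open MeasureTheory

/-- The conditional moment condition holds at the pseudo-parameters
`(α, β, ρ) = (α⁰ − π⁰/θ⁰, β⁰ + 1/θ⁰, ρ_x⁰)` when the innovations `u_t`, `η_t`,
`η_{t-1}` have zero conditional mean given `I_{t-1}`. -/
theorem pseudo_solution_conditional_moment_zero
    {Ω : Type*} {m m0 : MeasurableSpace Ω} (hm : m ≤ m0)
    (μ : Measure Ω) [IsProbabilityMeasure μ]
    (yt yt1 xt xt1 ωt ωt1 κt κt1 ξt ut ηt ηt1 : Ω → ℝ)
    (α0 β0 π0 θ0 ρω0 ρx0 : ℝ) (hθ : θ0 ≠ 0)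
    (hy : ∀ w, yt w = α0 + β0 * xt w + ωt w + ηt w)
    (hy1 : ∀ w, yt1 w = α0 + β0 * xt1 w + ωt1 w + ηt1 w)
    (hx : ∀ w, xt w = π0 + θ0 * ωt w + κt w)
    (hx1 : ∀ w, xt1 w = π0 + θ0 * ωt1 w + κt1 w)
    (hω : ∀ w, ωt w = ρω0 * ωt1 w + ξt w)
    (hκ : ∀ w, κt w = ρx0 * κt1 w + ut w)
    (hint_y : Integrable yt μ) (hint_y1 : Integrable yt1 μ)
    (hint_x : Integrable xt μ) (hint_x1 : Integrable xt1 μ)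
    (hint_u : Integrable ut μ) (hint_η : Integrable ηt μ)
    (hint_η1 : Integrable ηt1 μ)
    (hu : μ[ut | m] =ᵐ[μ] 0) (hη : μ[ηt | m] =ᵐ[μ] 0)
    (hη1 : μ[ηt1 | m] =ᵐ[μ] 0) :
    μ[fun w => -(1 / θ0) * ut w + ηt w - ρx0 * ηt1 w | m] =ᵐ[μ] 0 ∧
    μ[fun w => (yt w - ρx0 * yt1 w) - (α0 - π0 / θ0) * (1 - ρx0)
        - (β0 + 1 / θ0) * (xt w - ρx0 * xt1 w) | m] =ᵐ[μ] 0 := by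
  have hfun : (fun w => -(1 / θ0) * ut w + ηt w - ρx0 * ηt1 w)
      = (-(1 / θ0)) • ut + ηt - ρx0 • ηt1 := by
    funext w; simp
  have hfirst : μ[fun w => -(1 / θ0) * ut w + ηt w - ρx0 * ηt1 w | m] =ᵐ[μ] 0 := by
    rw [hfun]
    have hsum := condExp_sub (μ := μ) (m := m)
      ((hint_u.smul (-(1 / θ0))).add hint_η) (hint_η1.smul ρx0)
    have hsum2 := condExp_add (μ := μ) (m := m)
      (hint_u.smul (-(1 / θ0))) hint_η
    have hsA := condExp_smul (μ := μ) (m := m) (-(1 / θ0)) ut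
    have hsB := condExp_smul (μ := μ) (m := m) ρx0 ηt1
    filter_upwards [hsum, hsum2, hsA, hsB, hu, hη, hη1] with w h1 h2 h3 h4 h5 h6 h7
    simp only [Pi.sub_apply, Pi.add_apply, Pi.smul_apply, smul_eq_mul, Pi.zero_apply] at *
    rw [h1, h2, h3, h4, h5, h6, h7]; ring
  refine ⟨hfirst, ?_⟩
  have heq : (fun w => (yt w - ρx0 * yt1 w) - (α0 - π0 / θ0) * (1 - ρx0)
      - (β0 + 1 / θ0) * (xt w - ρx0 * xt1 w))
      = fun w => -(1 / θ0) * ut w + ηt w - ρx0 * ηt1 w := by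
    funext w
    rw [hy w, hy1 w, hx w, hx1 w, hκ w]
    field_simp
    ring
  rw [heq]
  exact hfirst
end
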